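/- Let X be a compact metric space with Borel σ-algebra B, μ a Borel probability measure on X, and (G_n)_{n≥1} a decreasing sequence of sub-σ-algebras of B with G = ⋂_{n≥1} G_n. Then for all Borel sets A, B ⊆ X one has μ⊠_{G_n} μ(A×B) → μ⊠_G μ(A×B) as n → ∞, and the sequence of measures (μ⊠_{G_n} μ)_{n≥1} converges weakly to μ⊠_G μ. -/

import Mathlib

open MeasureTheory Filter Topology Set
open scoped symmDiff Classical ENNReal NNReal

section Defs

variable {X : Type*}

/-- The pair `(x, y)` is (positively) asymptotic for `T`. -/
def IsAsymptoticPair [PseudoMetricSpace X] (T : X → X) (x y : X) : Prop :=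
  Tendsto (fun n : ℕ => dist (T^[n] x) (T^[n] y)) atTop (𝓝 0)

/-- Shannon entropy of the finite measurable partition of `X` given by the fibers of a
map `p` into a finite type. -/
noncomputable def partEntropy [MeasurableSpace X] (μ : Measure X) {ι : Type*} [Fintype ι]
    (p : X → ι) : ℝ :=
  ∑ i : ι, Real.negMulLog (μ (p ⁻¹' {i})).toReal

/-- Conditional Shannon entropy `H(P | F)` of the finite partition given by the fibers
of `p` with respect to the sub-σ-algebra `F`:
`H(P|F) = ∑_{A ∈ P} ∫ -E(1_A|F) log E(1_A|F) dμ`. -/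
noncomputable def condPartEntropy [MeasurableSpace X] (μ : Measure X)
    (F : MeasurableSpace X) {ι : Type*} [Fintype ι] (p : X → ι) : ℝ :=
  ∑ i : ι, ∫ x, Real.negMulLog ((μ[(p ⁻¹' {i}).indicator (fun _ => (1 : ℝ)) | F]) x) ∂μ

/-- The σ-algebra `σ(P^-)` generated by the partitions `T^{-n}P`, `n ≥ 1`
(the "past" of the partition given by the fibers of `p`). -/
def partPast (T : X → X) {ι : Type*} (p : X → ι) : MeasurableSpace X :=
  ⨆ n : ℕ, MeasurableSpace.comap (fun x => p (T^[n + 1] x)) ⊤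

/-- The σ-algebra `σ(P^T)` generated by the partitions `T^{-n}P`, `n ∈ ℤ`, where `S = T⁻¹`. -/
def partHull (T S : X → X) {ι : Type*} (p : X → ι) : MeasurableSpace X :=
  ⨆ n : ℕ,
    MeasurableSpace.comap (fun x => p (T^[n] x)) ⊤ ⊔
      MeasurableSpace.comap (fun x => p (S^[n] x)) ⊤

/-- Kolmogorov–Sinai entropy of a finite partition: `h_μ(P, T) = H(P | P^-)`. -/
noncomputable def partKS [MeasurableSpace X] (μ : Measure X) (T : X → X) {ι : Type*}
    [Fintype ι] (p : X → ι) : ℝ :=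
  condPartEntropy μ (partPast T p) p

/-- Kolmogorov–Sinai (measure-theoretic) entropy `h_μ(X, T)` of the system:
the supremum over all finite measurable partitions `P` of `h_μ(P, T)`. -/
noncomputable def ksEntropy [MeasurableSpace X] (μ : Measure X) (T : X → X) : ℝ≥0∞ :=
  ⨆ (k : ℕ) (p : X → Fin k) (_ : Measurable p), ENNReal.ofReal (partKS μ T p)

/-- The Pinsker σ-algebra `Π_μ`: the σ-algebra generated by all finite measurable
partitions with zero Kolmogorov–Sinai entropy. -/
def pinskerAlg [MeasurableSpace X] (μ : Measure X) (T : X → X) : MeasurableSpace X :=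
  ⨆ (k : ℕ) (p : X → Fin k) (_ : Measurable p) (_ : partKS μ T p = 0),
    MeasurableSpace.comap p ⊤

/-- Minimal cardinality of a subcover of `⋁_{i=0}^{n-1} T^{-i} C`, where `C` is a
finite cover of `X`. -/
noncomputable def coverNum (T : X → X) {k : ℕ} (C : Fin k → Set X) (n : ℕ) : ℕ :=
  sInf {m : ℕ | ∃ f : Fin m → Fin n → Fin k,
    (⋃ j : Fin m, ⋂ i : Fin n, T^[(i : ℕ)] ⁻¹' C (f j i)) = Set.univ}

/-- Topological entropy of a finite cover `C`:
`h(C, T) = inf_n (1/n) log N(⋁_{i=0}^{n-1} T^{-i} C) = lim_n (1/n) log N(...)`. -/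
noncomputable def coverEntropyOf (T : X → X) {k : ℕ} (C : Fin k → Set X) : ℝ :=
  ⨅ n : ℕ, Real.log (coverNum T C (n + 1)) / (n + 1)

/-- `(x, y)` is a topological entropy pair: `x ≠ y` and every two-set open cover
`{Uᶜ, Vᶜ}`, where `U` and `V` are disjoint closed neighbourhoods of `x` and `y`,
has positive topological entropy. -/
def IsEntropyPair [TopologicalSpace X] (T : X → X) (x y : X) : Prop :=
  x ≠ y ∧ ∀ U V : Set X, IsClosed U → IsClosed V → U ∈ 𝓝 x → V ∈ 𝓝 y → Disjoint U V →
    0 < coverEntropyOf T ![Uᶜ, Vᶜ]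

/-- `(x, y)` is an entropy pair for the invariant measure `μ`: `x ≠ y` and every two-set
Borel partition `(A, Aᶜ)` with `x ∈ interior A` and `y ∈ interior Aᶜ` has positive
entropy with respect to `T` and `μ`. -/
def IsMuEntropyPair [TopologicalSpace X] [MeasurableSpace X] (T : X → X) (μ : Measure X)
    (x y : X) : Prop :=
  x ≠ y ∧ ∀ A : Set X, MeasurableSet A → x ∈ interior A → y ∈ interior Aᶜ →
    0 < partKS μ T (fun z => if z ∈ A then (0 : Fin 2) else 1)

/-- `ν` is the relatively independent square `μ ⊠_G μ` of `μ` over the sub-σ-algebra `G`: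
it is determined by `ν(A × B) = ∫ E(1_A|G) · E(1_B|G) dμ` for all Borel sets `A`, `B`. -/
def IsCondSquare (G : MeasurableSpace X) [m0 : MeasurableSpace X] (μ : Measure X)
    (ν : Measure (X × X)) : Prop :=
  ∀ A B : Set X, MeasurableSet[m0] A → MeasurableSet[m0] B →
    ν (A ×ˢ B) = ENNReal.ofReal
      (∫ x, (μ[A.indicator (fun _ => (1 : ℝ)) | G]) x *
            (μ[B.indicator (fun _ => (1 : ℝ)) | G]) x ∂μ)

/-- The σ-algebra `m₁` is contained in `m₂` modulo `μ`-null sets. -/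
def SubModNull [MeasurableSpace X] (μ : Measure X) (m₁ m₂ : MeasurableSpace X) : Prop :=
  ∀ A : Set X, MeasurableSet[m₁] A → ∃ B : Set X, MeasurableSet[m₂] B ∧ μ (A ∆ B) = 0

end Defs

section Defs2

variable {X : Type*}

/-- The σ-algebra `F^- = ⋁_{n ≥ 1} T^{-n} F`. -/
def pastAlg (T : X → X) (F : MeasurableSpace X) : MeasurableSpace X :=
  ⨆ n : ℕ, MeasurableSpace.comap (T^[n + 1]) F

/-- The σ-algebra `F^T = ⋁_{n ∈ ℤ} T^{-n} F`, where `S = T⁻¹`. -/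
def hullAlg (T S : X → X) (F : MeasurableSpace X) : MeasurableSpace X :=
  ⨆ n : ℕ, MeasurableSpace.comap (T^[n]) F ⊔ MeasurableSpace.comap (S^[n]) F

/-- `P` is (the σ-algebra of) an *excellent* measurable partition for `(X, μ, T)` (here
`S = T⁻¹`): it is generating (`σ(P^T) = 𝒜` mod `μ`) and it is generated by an increasing
sequence of finite measurable partitions `Pₙ ↑ P` with `H(Pₙ|Pₙ⁻) − H(Pₙ|P⁻) → 0`. -/
def IsExcellentPartition (P : MeasurableSpace X) [m0 : MeasurableSpace X] (μ : Measure X)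
    (T S : X → X) : Prop :=
  P ≤ m0 ∧ SubModNull μ m0 (hullAlg T S P) ∧
  ∃ (m : ℕ → ℕ) (Q : ∀ n : ℕ, X → Fin (m n)),
    (∀ n, Measurable (Q n)) ∧
    Monotone (fun n => MeasurableSpace.comap (Q n) (⊤ : MeasurableSpace (Fin (m n)))) ∧
    (⨆ n : ℕ, MeasurableSpace.comap (Q n) (⊤ : MeasurableSpace (Fin (m n)))) = P ∧
    Tendsto (fun n => condPartEntropy μ (partPast T (Q n)) (Q n) -
      condPartEntropy μ (pastAlg T P) (Q n)) atTop (𝓝 0)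

end Defs2

section AuxSW

open MeasureTheory Filter Topology Set
open scoped ENNReal NNReal

variable {X : Type*} {G : MeasurableSpace X} [m0 : MeasurableSpace X] {μ : Measure X}
  [IsProbabilityMeasure μ]

set_option linter.unusedSectionVars false



variable {X : Type*} {G : MeasurableSpace X} [m0 : MeasurableSpace X] {μ : Measure X}
  [IsProbabilityMeasure μ]

lemma bdd_integrable {f : X → ℝ} (hf : AEStronglyMeasurable f μ) {C : ℝ}
    (hC : ∀ᵐ x ∂μ, |f x| ≤ C) : Integrable f μ :=
  ⟨hf, HasFiniteIntegral.of_bounded (C := C) (by simpa [Real.norm_eq_abs] using hC)⟩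

lemma condexp_abs_le (hG : G ≤ m0) {f : X → ℝ} {C : ℝ}
    (hf : Integrable f μ) (hC : ∀ᵐ x ∂μ, |f x| ≤ C) :
    ∀ᵐ x ∂μ, |(μ[f|G]) x| ≤ C := by
  have h1 : μ[f|G] ≤ᵐ[μ] μ[(fun _ => C)|G] :=
    condExp_mono hf (integrable_const C) (hC.mono fun x hx => (abs_le.1 hx).2)
  have h2 : μ[(fun _ => -C)|G] ≤ᵐ[μ] μ[f|G] :=
    condExp_mono (integrable_const _) hf (hC.mono fun x hx => (abs_le.1 hx).1)
  rw [condExp_const hG] at h1 h2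
  filter_upwards [h1, h2] with x hx1 hx2
  exact abs_le.2 ⟨hx2, hx1⟩

lemma integral_mul_condexp (hG : G ≤ m0) {u f : X → ℝ} {Cu : ℝ}
    (hu : StronglyMeasurable[G] u) (hub : ∀ᵐ x ∂μ, |u x| ≤ Cu) (hf : Integrable f μ) :
    ∫ x, u x * (μ[f|G]) x ∂μ = ∫ x, u x * f x ∂μ := by
  have hpull : μ[u * f|G] =ᵐ[μ] u * μ[f|G] :=
    condExp_stronglyMeasurable_mul_of_bound hG hu hf Cu (by simpa [Real.norm_eq_abs] using hub)
  calc ∫ x, u x * (μ[f|G]) x ∂μ = ∫ x, (u * μ[f|G]) x ∂μ := rfl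
  _ = ∫ x, (μ[u * f|G]) x ∂μ := (integral_congr_ae hpull).symm
  _ = ∫ x, (u * f) x ∂μ := integral_condExp hG
  _ = ∫ x, u x * f x ∂μ := rfl

lemma IsCondSquare.isProbabilityMeasure' {ν : Measure (X × X)}
    (hG : G ≤ m0) (hν : IsCondSquare G μ ν) : IsProbabilityMeasure ν := by
  constructor
  have h := hν Set.univ Set.univ MeasurableSet.univ MeasurableSet.univ
  rw [Set.univ_prod_univ] at h
  rw [h]
  have hind : Set.univ.indicator (fun _ : X => (1 : ℝ)) = fun _ => 1 := by simp
  rw [hind, condExp_const hG]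
  simp

lemma indicator_integrable {A : Set X} (hA : MeasurableSet A) :
    Integrable (A.indicator (fun _ => (1 : ℝ))) μ :=
  (integrable_const (1 : ℝ)).indicator hA

lemma indicator_abs_le (A : Set X) : ∀ x, |A.indicator (fun _ => (1 : ℝ)) x| ≤ 1 := by
  intro x; by_cases hx : x ∈ A <;> simp [hx]

/-- Key identity: `∫ u·E(1_B|G) dμ = ∫_B E(u'|G)` style computations. -/
private lemma integral_mul_indicator' {u : X → ℝ} {B : Set X} (hB : MeasurableSet B) :
    ∫ x, u x * B.indicator (fun _ => (1 : ℝ)) x ∂μ = ∫ x in B, u x ∂μ := by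
  have : (fun x => u x * B.indicator (fun _ => (1 : ℝ)) x) = B.indicator u := by
    funext x; by_cases hx : x ∈ B <;> simp [hx]
  rw [this, integral_indicator hB]

/-- The first-coordinate slice measure of a conditional square. -/
private lemma condSquare_fst_measure {ν : Measure (X × X)}
    (hG : G ≤ m0) (hν : IsCondSquare G μ ν) {B : Set X} (hB : MeasurableSet B) :
    (ν.restrict (Set.univ ×ˢ B)).map Prod.fst
      = μ.withDensity (fun x => ENNReal.ofReal ((μ[B.indicator (fun _ => (1 : ℝ))|G]) x)) := by
  set w : X → ℝ := μ[B.indicator (fun _ => (1 : ℝ))|G] with hw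
  have hw_sm : StronglyMeasurable[G] w := stronglyMeasurable_condExp
  have hw_b : ∀ᵐ x ∂μ, |w x| ≤ 1 :=
    condexp_abs_le hG (indicator_integrable hB) (.of_forall (indicator_abs_le B))
  have hw_nn : 0 ≤ᵐ[μ] w :=
    condExp_nonneg (.of_forall fun x => Set.indicator_nonneg (fun _ _ => zero_le_one) x)
  refine Measure.ext fun A hA => ?_
  rw [Measure.map_apply measurable_fst hA, Measure.restrict_apply (measurable_fst hA)]
  have hset : Prod.fst ⁻¹' A ∩ Set.univ ×ˢ B = A ×ˢ B := by
    ext p; simp [Set.mem_prod]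
  rw [hset, hν A B hA hB, withDensity_apply _ hA]
  have h1 : ∫ x, (μ[A.indicator (fun _ => (1 : ℝ))|G]) x * w x ∂μ = ∫ x in A, w x ∂μ := by
    calc ∫ x, (μ[A.indicator (fun _ => (1 : ℝ))|G]) x * w x ∂μ
        = ∫ x, w x * (μ[A.indicator (fun _ => (1 : ℝ))|G]) x ∂μ :=
          integral_congr_ae (.of_forall fun x => mul_comm _ _)
    _ = ∫ x, w x * A.indicator (fun _ => (1 : ℝ)) x ∂μ :=
          integral_mul_condexp hG hw_sm hw_b (indicator_integrable hA)
    _ = ∫ x in A, w x ∂μ := integral_mul_indicator' hA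
  rw [h1, ofReal_integral_eq_lintegral_ofReal integrable_condExp.integrableOn
    (ae_restrict_of_ae hw_nn)]

/-- The second-coordinate density measure of a conditional square, for nonneg `g`. -/
private lemma condSquare_snd_density {ν : Measure (X × X)}
    (hG : G ≤ m0) (hν : IsCondSquare G μ ν) {g : X → ℝ} (hg : Measurable g)
    (hg0 : ∀ x, 0 ≤ g x) {Cg : ℝ} (hgb : ∀ x, |g x| ≤ Cg) :
    (ν.withDensity (fun p => ENNReal.ofReal (g p.1))).map Prod.snd
      = μ.withDensity (fun x => ENNReal.ofReal ((μ[g|G]) x)) := by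
  have hgi : Integrable g μ := bdd_integrable hg.aestronglyMeasurable (.of_forall hgb)
  have hgc_sm : StronglyMeasurable[G] (μ[g|G]) := stronglyMeasurable_condExp
  have hgc_b : ∀ᵐ x ∂μ, |(μ[g|G]) x| ≤ Cg := condexp_abs_le hG hgi (.of_forall hgb)
  have hgc_nn : 0 ≤ᵐ[μ] μ[g|G] := condExp_nonneg (.of_forall hg0)
  refine Measure.ext fun B hB => ?_
  rw [Measure.map_apply measurable_snd hB, withDensity_apply _ (measurable_snd hB)]
  rw [withDensity_apply _ hB]
  set w : X → ℝ := μ[B.indicator (fun _ => (1 : ℝ))|G] with hw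
  have hw_sm : StronglyMeasurable[G] w := stronglyMeasurable_condExp
  have hw_b : ∀ᵐ x ∂μ, |w x| ≤ 1 :=
    condexp_abs_le hG (indicator_integrable hB) (.of_forall (indicator_abs_le B))
  have hw_nn : 0 ≤ᵐ[μ] w :=
    condExp_nonneg (.of_forall fun x => Set.indicator_nonneg (fun _ _ => zero_le_one) x)
  have hwg_int : Integrable (fun x => w x * g x) μ :=
    bdd_integrable ((hw_sm.mono hG).aestronglyMeasurable.mul hg.aestronglyMeasurable)
      (by filter_upwards [hw_b] with x h1
          calc |w x * g x| = |w x| * |g x| := abs_mul _ _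
          _ ≤ 1 * Cg := mul_le_mul h1 (hgb x) (abs_nonneg _) zero_le_one
          _ = Cg := one_mul _)
  have hset : (Prod.snd ⁻¹' B : Set (X × X)) = Set.univ ×ˢ B := by ext p; simp
  have hkey : ∫ x, w x * g x ∂μ = ∫ x in B, (μ[g|G]) x ∂μ := by
    calc ∫ x, w x * g x ∂μ = ∫ x, w x * (μ[g|G]) x ∂μ :=
          (integral_mul_condexp hG hw_sm hw_b hgi).symm
    _ = ∫ x, (μ[g|G]) x * w x ∂μ := integral_congr_ae (.of_forall fun x => mul_comm _ _)
    _ = ∫ x, (μ[g|G]) x * B.indicator (fun _ => (1 : ℝ)) x ∂μ :=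
          integral_mul_condexp hG hgc_sm hgc_b (indicator_integrable hB)
    _ = ∫ x in B, (μ[g|G]) x ∂μ := integral_mul_indicator' hB
  calc ∫⁻ p in Prod.snd ⁻¹' B, ENNReal.ofReal (g p.1) ∂ν
      = ∫⁻ x, ENNReal.ofReal (g x) ∂((ν.restrict (Set.univ ×ˢ B)).map Prod.fst) := by
        rw [lintegral_map hg.ennreal_ofReal measurable_fst, hset]
  _ = ∫⁻ x, ENNReal.ofReal (g x) ∂(μ.withDensity (fun x => ENNReal.ofReal (w x))) := by
        rw [condSquare_fst_measure hG hν hB]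
  _ = ∫⁻ x, ((fun x => ENNReal.ofReal (w x)) * fun x => ENNReal.ofReal (g x)) x ∂μ := by
        rw [lintegral_withDensity_eq_lintegral_mul μ
          ((hw_sm.mono hG).measurable.ennreal_ofReal) hg.ennreal_ofReal]
  _ = ∫⁻ x, ENNReal.ofReal (w x * g x) ∂μ := by
        refine lintegral_congr_ae ?_
        filter_upwards [hw_nn] with x hx
        simp [ENNReal.ofReal_mul hx]
  _ = ENNReal.ofReal (∫ x, w x * g x ∂μ) := by
        rw [ofReal_integral_eq_lintegral_ofReal hwg_int]
        filter_upwards [hw_nn] with x hx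
        exact mul_nonneg hx (hg0 x)
  _ = ENNReal.ofReal (∫ x in B, (μ[g|G]) x ∂μ) := by rw [hkey]
  _ = ∫⁻ x in B, ENNReal.ofReal ((μ[g|G]) x) ∂μ :=
        ofReal_integral_eq_lintegral_ofReal integrable_condExp.integrableOn
          (ae_restrict_of_ae hgc_nn)

private lemma condSquare_integral_nonneg {ν : Measure (X × X)}
    (hG : G ≤ m0) (hν : IsCondSquare G μ ν) {g h : X → ℝ} (hg : Measurable g)
    (hh : Measurable h) (hg0 : ∀ x, 0 ≤ g x) {Cg Ch : ℝ} (hgb : ∀ x, |g x| ≤ Cg)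
    (hhb : ∀ x, |h x| ≤ Ch) :
    ∫ p, g p.1 * h p.2 ∂ν = ∫ x, (μ[g|G]) x * (μ[h|G]) x ∂μ := by
  haveI : IsProbabilityMeasure ν := hν.isProbabilityMeasure' hG
  have hgi : Integrable g μ := bdd_integrable hg.aestronglyMeasurable (.of_forall hgb)
  have hhi : Integrable h μ := bdd_integrable hh.aestronglyMeasurable (.of_forall hhb)
  have hgc_b : ∀ᵐ x ∂μ, |(μ[g|G]) x| ≤ Cg := condexp_abs_le hG hgi (.of_forall hgb)
  have hgc_nn : 0 ≤ᵐ[μ] μ[g|G] := condExp_nonneg (.of_forall hg0)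
  have hfstm : Measurable (fun p : X × X => (g p.1).toNNReal) :=
    (hg.comp measurable_fst).real_toNNReal
  have hcm : Measurable (fun x => ((μ[g|G]) x).toNNReal) :=
    (stronglyMeasurable_condExp.mono hG).measurable.real_toNNReal
  calc ∫ p, g p.1 * h p.2 ∂ν
      = ∫ p, (fun q : X × X => (g q.1).toNNReal) p • h p.2 ∂ν := by
        refine integral_congr_ae (.of_forall fun p => ?_)
        simp [NNReal.smul_def, Real.coe_toNNReal _ (hg0 p.1)]
  _ = ∫ p, h p.2 ∂(ν.withDensity (fun p => ((g p.1).toNNReal : ℝ≥0∞))) :=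
        (integral_withDensity_eq_integral_smul hfstm _).symm
  _ = ∫ y, h y ∂((ν.withDensity (fun p => ENNReal.ofReal (g p.1))).map Prod.snd) := by
        rw [integral_map measurable_snd.aemeasurable hh.aestronglyMeasurable]
        rfl
  _ = ∫ y, h y ∂(μ.withDensity fun x => ENNReal.ofReal ((μ[g|G]) x)) := by
        rw [condSquare_snd_density hG hν hg hg0 hgb]
  _ = ∫ x, (fun y => ((μ[g|G]) y).toNNReal) x • h x ∂μ :=
        integral_withDensity_eq_integral_smul hcm _
  _ = ∫ x, (μ[g|G]) x * h x ∂μ := by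
        refine integral_congr_ae ?_
        filter_upwards [hgc_nn] with x hx
        simp [NNReal.smul_def, Real.coe_toNNReal _ hx]
  _ = ∫ x, (μ[g|G]) x * (μ[h|G]) x ∂μ :=
        (integral_mul_condexp hG stronglyMeasurable_condExp hgc_b hhi).symm

/-- Integral of a product function against a conditional square. -/
lemma IsCondSquare.integral_prod_mul {ν : Measure (X × X)}
    (hG : G ≤ m0) (hν : IsCondSquare G μ ν) {g h : X → ℝ} (hg : Measurable g)
    (hh : Measurable h) {Cg Ch : ℝ} (hgb : ∀ x, |g x| ≤ Cg) (hhb : ∀ x, |h x| ≤ Ch) :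
    ∫ p, g p.1 * h p.2 ∂ν = ∫ x, (μ[g|G]) x * (μ[h|G]) x ∂μ := by
  haveI : IsProbabilityMeasure ν := hν.isProbabilityMeasure' hG
  have hX : Nonempty X := by
    by_contra hX
    rw [not_nonempty_iff] at hX
    have h0 := measure_univ (μ := μ)
    rw [Set.univ_eq_empty_iff.2 hX] at h0
    simp at h0
  have hCg : 0 ≤ Cg := le_trans (abs_nonneg _) (hgb (Classical.arbitrary X))
  have hgi : Integrable g μ := bdd_integrable hg.aestronglyMeasurable (.of_forall hgb)
  have hhi : Integrable h μ := bdd_integrable hh.aestronglyMeasurable (.of_forall hhb)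
  -- shifted function
  set g' : X → ℝ := fun x => g x + Cg with hg'def
  have hg'm : Measurable g' := hg.add_const Cg
  have hg'0 : ∀ x, 0 ≤ g' x := fun x => by
    have := (abs_le.1 (hgb x)).1; simp only [hg'def]; linarith
  have hg'b : ∀ x, |g' x| ≤ Cg + Cg := fun x => by
    obtain ⟨h1, h2⟩ := abs_le.1 (hgb x)
    rw [abs_le]
    refine ⟨by simp only [hg'def]; linarith, by simp only [hg'def]; linarith⟩
  have hcb : ∀ x : X, |(fun _ : X => Cg) x| ≤ Cg := fun x => by simp [abs_of_nonneg hCg]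
  have e1 := condSquare_integral_nonneg hG hν hg'm hh hg'0 hg'b hhb
  have e2 := condSquare_integral_nonneg hG hν (measurable_const (a := Cg)) hh
    (fun _ => hCg) hcb hhb
  -- integrability over ν of the three product functions
  have hmul_int : ∀ (u : X → ℝ), Measurable u → (∀ x, |u x| ≤ Cg + Cg) →
      Integrable (fun p : X × X => u p.1 * h p.2) ν := by
    intro u hu hub
    refine bdd_integrable (C := (Cg + Cg) * Ch)
      (((hu.comp measurable_fst).mul (hh.comp measurable_snd)).aestronglyMeasurable)
      (.of_forall fun p => ?_)
    calc |u p.1 * h p.2| = |u p.1| * |h p.2| := abs_mul _ _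
    _ ≤ (Cg + Cg) * Ch := by
        have h2 := hhb p.2
        exact mul_le_mul (hub p.1) h2 (abs_nonneg _) (by linarith [hub p.1, abs_nonneg (u p.1)])
  have hint1 : Integrable (fun p : X × X => g p.1 * h p.2) ν :=
    hmul_int g hg (fun x => le_trans (hgb x) (by linarith))
  have hint2 : Integrable (fun p : X × X => Cg * h p.2) ν :=
    hmul_int (fun _ => Cg) measurable_const (fun x => by simp [abs_of_nonneg hCg]; linarith)
  -- condexp of the shift
  have hshift : μ[g'|G] =ᵐ[μ] fun x => (μ[g|G]) x + Cg := by
    have h1 : μ[g + (fun _ : X => Cg)|G] =ᵐ[μ] μ[g|G] + μ[(fun _ : X => Cg)|G] :=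
      condExp_add hgi (integrable_const Cg) G
    have h2 : μ[(fun _ : X => Cg)|G] = fun _ => Cg := condExp_const hG Cg
    refine h1.mono fun x hx => ?_
    simp only [Pi.add_apply, h2] at hx
    exact hx
  -- LHS split
  have hL : ∫ p, g' p.1 * h p.2 ∂ν
      = (∫ p, g p.1 * h p.2 ∂ν) + ∫ p, Cg * h p.2 ∂ν := by
    rw [← integral_add hint1 hint2]
    refine integral_congr_ae (.of_forall fun p => ?_)
    simp [hg'def]; ring
  -- RHS split
  have hcondint : Integrable (fun x => (μ[g|G]) x * (μ[h|G]) x) μ := by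
    refine bdd_integrable (C := Cg * Ch)
      (((stronglyMeasurable_condExp.mono hG).aestronglyMeasurable).mul
        ((stronglyMeasurable_condExp.mono hG).aestronglyMeasurable)) ?_
    filter_upwards [condexp_abs_le hG hgi (.of_forall hgb),
      condexp_abs_le hG hhi (.of_forall hhb)] with x h1 h2
    calc |(μ[g|G]) x * (μ[h|G]) x| = |(μ[g|G]) x| * |(μ[h|G]) x| := abs_mul _ _
    _ ≤ Cg * Ch := mul_le_mul h1 h2 (abs_nonneg _) ((abs_nonneg _).trans h1)
  have hcondint2 : Integrable (fun x => Cg * (μ[h|G]) x) μ := integrable_condExp.const_mul Cg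
  have hR : ∫ x, (μ[g'|G]) x * (μ[h|G]) x ∂μ
      = (∫ x, (μ[g|G]) x * (μ[h|G]) x ∂μ) + ∫ x, Cg * (μ[h|G]) x ∂μ := by
    rw [← integral_add hcondint hcondint2]
    refine integral_congr_ae ?_
    filter_upwards [hshift] with x hx
    rw [hx]; ring
  have hRc : ∫ x, (μ[(fun _ : X => Cg)|G]) x * (μ[h|G]) x ∂μ
      = ∫ x, Cg * (μ[h|G]) x ∂μ := by
    rw [condExp_const hG Cg]
  have heq : (∫ p, g p.1 * h p.2 ∂ν) + ∫ p, Cg * h p.2 ∂ν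
      = (∫ x, (μ[g|G]) x * (μ[h|G]) x ∂μ) + ∫ x, Cg * (μ[h|G]) x ∂μ := by
    rw [← hL, e1, hR]
  have heq2 : ∫ p, Cg * h p.2 ∂ν = ∫ x, Cg * (μ[h|G]) x ∂μ := by
    rw [e2, hRc]
  linarith [heq, heq2]

private lemma meas_liminf_ennreal {α : Type*} {mα : MeasurableSpace α} {u : ℕ → α → ℝ≥0∞}
    (h : ∀ k, Measurable[mα] (u k)) :
    Measurable[mα] (fun x => Filter.liminf (fun k => u k x) Filter.atTop) :=
  Measurable.liminf h

/-- Lévy's downward theorem, L¹ version, for bounded functions. -/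
lemma condexp_L1_tendsto (G : ℕ → MeasurableSpace X) (hG : ∀ n, G n ≤ m0) (hmono : Antitone G)
    {f : X → ℝ} (hf : Measurable f) {C : ℝ} (hC : ∀ x, |f x| ≤ C) :
    Tendsto (fun n => ∫ x, |(μ[f|G n]) x - (μ[f|⨅ k, G k]) x| ∂μ) atTop (𝓝 0) := by
  have hGinf_le : (⨅ k, G k) ≤ m0 := (iInf_le G 0).trans (hG 0)
  have hfi : Integrable f μ := bdd_integrable hf.aestronglyMeasurable (.of_forall hC)
  set fn : ℕ → X → ℝ := fun n => μ[f|G n] with hfn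
  have hfnb : ∀ n, ∀ᵐ x ∂μ, |fn n x| ≤ C := fun n =>
    condexp_abs_le (hG n) hfi (.of_forall hC)
  have hfnsm : ∀ n, AEStronglyMeasurable (fn n) μ := fun n =>
    (stronglyMeasurable_condExp.mono (hG n)).aestronglyMeasurable
  have hfnm : ∀ n, MemLp (fn n) 2 μ := fun n =>
    MemLp.of_bound (hfnsm n) C (by simpa [Real.norm_eq_abs] using hfnb n)
  set Fn : ℕ → Lp ℝ 2 μ := fun n => (hfnm n).toLp (fn n) with hFn
  have hinner : ∀ k l : ℕ, (inner ℝ (Fn k) (Fn l) : ℝ) = ∫ x, fn k x * fn l x ∂μ := by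
    intro k l
    rw [MeasureTheory.L2.inner_def]
    refine integral_congr_ae ?_
    filter_upwards [(hfnm k).coeFn_toLp, (hfnm l).coeFn_toLp] with x hk hl
    simp [Fn, hk, hl, RCLike.inner_apply, conj_trivial, mul_comm]
  have key : ∀ m n, m ≤ n → (inner ℝ (Fn n) (Fn m) : ℝ) = ‖Fn n‖ ^ 2 := by
    intro m n hmn
    have h1 : ∫ x, fn n x * fn m x ∂μ = ∫ x, fn n x * f x ∂μ :=
      integral_mul_condexp (hG m) (stronglyMeasurable_condExp.mono (hmono hmn))
        (hfnb n) hfi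
    have h2 : ∫ x, fn n x * fn n x ∂μ = ∫ x, fn n x * f x ∂μ :=
      integral_mul_condexp (hG n) stronglyMeasurable_condExp (hfnb n) hfi
    rw [hinner, h1, ← h2, ← hinner, real_inner_self_eq_norm_sq]
  set a : ℕ → ℝ := fun n => ‖Fn n‖ ^ 2 with ha
  have hdist : ∀ m n, m ≤ n → dist (Fn n) (Fn m) ^ 2 = a m - a n := by
    intro m n hmn
    rw [dist_eq_norm, norm_sub_sq_real, key m n hmn]
    ring
  have ha_anti : Antitone a := by
    intro m n hmn
    have h := hdist m n hmn
    nlinarith [sq_nonneg (dist (Fn n) (Fn m))]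
  have ha_bdd : BddBelow (Set.range a) := ⟨0, by rintro _ ⟨n, rfl⟩; positivity⟩
  have ha_tend : Tendsto a atTop (𝓝 (⨅ n, a n)) := tendsto_atTop_ciInf ha_anti ha_bdd
  have hcauchy : CauchySeq Fn := by
    rw [Metric.cauchySeq_iff']
    intro ε hε
    obtain ⟨N, hN⟩ := (ha_tend.eventually
      (gt_mem_nhds (by nlinarith : (⨅ n, a n) < (⨅ n, a n) + ε ^ 2))).exists
    refine ⟨N, fun n hn => ?_⟩
    have hL : (⨅ k, a k) ≤ a n := ciInf_le ha_bdd n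
    have hd := hdist N n hn
    nlinarith [dist_nonneg (x := Fn n) (y := Fn N)]
  obtain ⟨F, hF⟩ := cauchySeq_tendsto_of_complete hcauchy
  set h : X → ℝ := ⇑F with hh
  have hh_meas : AEStronglyMeasurable h μ := (Lp.memLp F).aestronglyMeasurable
  have hh_int : Integrable h μ := (Lp.memLp F).integrable (by norm_num)
  have hcoe : ∀ n, eLpNorm (fn n - h) 2 μ = ENNReal.ofReal ‖Fn n - F‖ := by
    intro n
    have heq : fn n - h =ᵐ[μ] ⇑(Fn n - F) := by
      filter_upwards [(hfnm n).coeFn_toLp, Lp.coeFn_sub (Fn n) F] with x h1 h2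
      simp only [Pi.sub_apply, h2]
      rw [← h1]
    rw [eLpNorm_congr_ae heq, Lp.norm_def, ENNReal.ofReal_toReal (Lp.eLpNorm_ne_top _)]
  have hL2 : Tendsto (fun n => eLpNorm (fn n - h) 2 μ) atTop (𝓝 0) := by
    simp_rw [hcoe]
    have h0 : Tendsto (fun n => ‖Fn n - F‖) atTop (𝓝 0) := by
      simpa [dist_eq_norm] using tendsto_iff_dist_tendsto_zero.mp hF
    have := (ENNReal.continuous_ofReal.tendsto 0).comp h0
    simpa [Function.comp_def] using this
  have hsub_sm : ∀ n, AEStronglyMeasurable (fn n - h) μ := fun n => (hfnsm n).sub hh_meas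
  have hL1 : Tendsto (fun n => eLpNorm (fn n - h) 1 μ) atTop (𝓝 0) := by
    refine tendsto_of_tendsto_of_tendsto_of_le_of_le tendsto_const_nhds hL2
      (fun n => zero_le) (fun n => ?_)
    exact eLpNorm_le_eLpNorm_of_exponent_le (by norm_num) (hsub_sm n)
  have habs_eq : ∀ n, ∫ x, |fn n x - h x| ∂μ = (eLpNorm (fn n - h) 1 μ).toReal := by
    intro n
    rw [eLpNorm_one_eq_lintegral_enorm, ← integral_norm_eq_lintegral_enorm (hsub_sm n)]
    simp [Real.norm_eq_abs]
  have habs : Tendsto (fun n => ∫ x, |fn n x - h x| ∂μ) atTop (𝓝 0) := by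
    have := (ENNReal.tendsto_toReal (by simp : (0 : ℝ≥0∞) ≠ ⊤)).comp hL1
    simp only [Function.comp_def, ENNReal.toReal_zero] at this
    simpa [habs_eq]
  -- a.e. convergent subsequence
  have htim : TendstoInMeasure μ fn atTop h :=
    tendstoInMeasure_of_tendsto_eLpNorm (p := 2) (by norm_num) hfnsm hh_meas hL2
  obtain ⟨ns, hns_mono, hns_ae⟩ := htim.exists_seq_tendsto_ae
  -- construct a Ginf-measurable representative
  set ρ : ℕ → X → ℝ≥0∞ := fun k x => ENNReal.ofReal (fn (ns k) x + C) with hρ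
  set H : X → ℝ≥0∞ := fun x => Filter.liminf (fun k => ρ k x) Filter.atTop with hH
  have hρmeas : ∀ m k, Measurable[G m] (ρ (k + m)) := by
    intro m k
    have h2 : G (ns (k + m)) ≤ G m := hmono ((Nat.le_add_left m k).trans hns_mono.le_apply)
    have h1 : StronglyMeasurable[G m] (fn (ns (k + m))) := stronglyMeasurable_condExp.mono h2
    exact (h1.measurable.add_const C).ennreal_ofReal
  have hHmeas : ∀ m : ℕ, Measurable[G m] H := by
    intro m
    have hrw : H = fun x => Filter.liminf (fun k => ρ (k + m) x) Filter.atTop := by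
      funext x; exact (Filter.liminf_nat_add (fun k => ρ k x) m).symm
    rw [hrw]
    exact meas_liminf_ennreal (hρmeas m)
  have hHinf : Measurable[⨅ k, G k] H := fun t ht =>
    MeasurableSpace.measurableSet_iInf.2 fun m => hHmeas m ht
  set h' : X → ℝ := fun x => (H x).toReal - C with hh'
  have hh'_meas : StronglyMeasurable[⨅ k, G k] h' :=
    (hHinf.ennreal_toReal.sub measurable_const).stronglyMeasurable
  have hae_eq : h =ᵐ[μ] h' := by
    have hball : ∀ᵐ x ∂μ, ∀ k, |fn (ns k) x| ≤ C := ae_all_iff.2 fun k => hfnb (ns k)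
    filter_upwards [hns_ae, hball] with x hx hbx
    have h1 : Tendsto (fun k => ρ k x) atTop (𝓝 (ENNReal.ofReal (h x + C))) :=
      (ENNReal.continuous_ofReal.tendsto _).comp (hx.add_const C)
    have h2 : H x = ENNReal.ofReal (h x + C) := h1.liminf_eq
    have h3 : -C ≤ h x := ge_of_tendsto hx (.of_forall fun k => (abs_le.1 (hbx k)).1)
    simp only [hh', h2, ENNReal.toReal_ofReal (by linarith : (0:ℝ) ≤ h x + C)]
    ring
  -- set integral identification
  have hsetint : ∀ s, MeasurableSet[⨅ k, G k] s → ∫ x in s, h x ∂μ = ∫ x in s, f x ∂μ := by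
    intro s hs
    have hs' : ∀ k, ∫ x in s, fn (ns k) x ∂μ = ∫ x in s, f x ∂μ := fun k =>
      setIntegral_condExp (hG (ns k)) hfi ((iInf_le G (ns k)) s hs)
    have hconv : Tendsto (fun k => ∫ x in s, fn (ns k) x ∂μ) atTop (𝓝 (∫ x in s, h x ∂μ)) := by
      have h2 : Tendsto (fun k => ∫ x, |fn (ns k) x - h x| ∂μ) atTop (𝓝 0) :=
        habs.comp hns_mono.tendsto_atTop
      have h1 : ∀ k, ‖∫ x in s, fn (ns k) x ∂μ - ∫ x in s, h x ∂μ‖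
          ≤ ∫ x, |fn (ns k) x - h x| ∂μ := by
        intro k
        rw [← integral_sub integrable_condExp.integrableOn hh_int.integrableOn]
        calc ‖∫ x in s, (fn (ns k) x - h x) ∂μ‖ ≤ ∫ x in s, ‖fn (ns k) x - h x‖ ∂μ :=
              norm_integral_le_integral_norm _
        _ = ∫ x in s, |fn (ns k) x - h x| ∂μ := by simp [Real.norm_eq_abs]
        _ ≤ ∫ x, |fn (ns k) x - h x| ∂μ :=
              setIntegral_le_integral (integrable_condExp.sub hh_int).abs
                (.of_forall fun x => abs_nonneg _)
      have hdiff : Tendsto (fun k => ∫ x in s, fn (ns k) x ∂μ - ∫ x in s, h x ∂μ)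
          atTop (𝓝 0) := squeeze_zero_norm h1 h2
      have := hdiff.add_const (∫ x in s, h x ∂μ)
      simpa using this
    simp_rw [hs'] at hconv
    exact (tendsto_nhds_unique tendsto_const_nhds hconv).symm
  have hgeq : h =ᵐ[μ] μ[f|⨅ k, G k] := by
    refine ae_eq_condExp_of_forall_setIntegral_eq hGinf_le hfi
      (fun s _ _ => hh_int.integrableOn) (fun s hs _ => hsetint s hs) ?_
    exact ⟨h', hh'_meas, hae_eq⟩
  have hfinal : ∀ n, ∫ x, |fn n x - (μ[f|⨅ k, G k]) x| ∂μ = ∫ x, |fn n x - h x| ∂μ := fun n =>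
    integral_congr_ae (hgeq.mono fun x hx => by simp only [← hx])
  exact (tendsto_congr hfinal).mpr habs


/-- Convergence of the product integrals. -/
lemma tendsto_integral_condexp_mul (G : ℕ → MeasurableSpace X) (hG : ∀ n, G n ≤ m0)
    (hmono : Antitone G) {f₁ f₂ : X → ℝ} (h₁ : Measurable f₁) (h₂ : Measurable f₂)
    {C₁ C₂ : ℝ} (hb₁ : ∀ x, |f₁ x| ≤ C₁) (hb₂ : ∀ x, |f₂ x| ≤ C₂) :
    Tendsto (fun n => ∫ x, (μ[f₁|G n]) x * (μ[f₂|G n]) x ∂μ) atTop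
      (𝓝 (∫ x, (μ[f₁|⨅ k, G k]) x * (μ[f₂|⨅ k, G k]) x ∂μ)) := by
  have hGinf_le : (⨅ k, G k) ≤ m0 := (iInf_le G 0).trans (hG 0)
  have t1 := condexp_L1_tendsto (μ := μ) G hG hmono h₁ hb₁
  have t2 := condexp_L1_tendsto (μ := μ) G hG hmono h₂ hb₂
  have hfi₁ : Integrable f₁ μ := bdd_integrable h₁.aestronglyMeasurable (.of_forall hb₁)
  have hfi₂ : Integrable f₂ μ := bdd_integrable h₂.aestronglyMeasurable (.of_forall hb₂)
  set u : ℕ → X → ℝ := fun n => μ[f₁|G n]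
  set v : ℕ → X → ℝ := fun n => μ[f₂|G n]
  set u' : X → ℝ := μ[f₁|⨅ k, G k]
  set v' : X → ℝ := μ[f₂|⨅ k, G k]
  have hub : ∀ n, ∀ᵐ x ∂μ, |u n x| ≤ C₁ := fun n =>
    condexp_abs_le (hG n) hfi₁ (.of_forall hb₁)
  have hvb : ∀ n, ∀ᵐ x ∂μ, |v n x| ≤ C₂ := fun n =>
    condexp_abs_le (hG n) hfi₂ (.of_forall hb₂)
  have hub' : ∀ᵐ x ∂μ, |u' x| ≤ C₁ := condexp_abs_le hGinf_le hfi₁ (.of_forall hb₁)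
  have hvb' : ∀ᵐ x ∂μ, |v' x| ≤ C₂ := condexp_abs_le hGinf_le hfi₂ (.of_forall hb₂)
  have husm : ∀ n, AEStronglyMeasurable (u n) μ := fun n =>
    (stronglyMeasurable_condExp.mono (hG n)).aestronglyMeasurable
  have hvsm : ∀ n, AEStronglyMeasurable (v n) μ := fun n =>
    (stronglyMeasurable_condExp.mono (hG n)).aestronglyMeasurable
  have husm' : AEStronglyMeasurable u' μ :=
    (stronglyMeasurable_condExp.mono hGinf_le).aestronglyMeasurable
  have hvsm' : AEStronglyMeasurable v' μ :=
    (stronglyMeasurable_condExp.mono hGinf_le).aestronglyMeasurable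
  have hiuv : ∀ n, Integrable (fun x => u n x * v n x) μ := fun n =>
    bdd_integrable ((husm n).mul (hvsm n))
      (by filter_upwards [hub n, hvb n] with x h1 h2
          calc |u n x * v n x| = |u n x| * |v n x| := abs_mul _ _
          _ ≤ C₁ * C₂ := mul_le_mul h1 h2 (abs_nonneg _) ((abs_nonneg _).trans h1))
  have hiuv' : Integrable (fun x => u' x * v' x) μ :=
    bdd_integrable (husm'.mul hvsm')
      (by filter_upwards [hub', hvb'] with x h1 h2
          calc |u' x * v' x| = |u' x| * |v' x| := abs_mul _ _
          _ ≤ C₁ * C₂ := mul_le_mul h1 h2 (abs_nonneg _) ((abs_nonneg _).trans h1))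
  have key : ∀ n, ‖∫ x, u n x * v n x ∂μ - ∫ x, u' x * v' x ∂μ‖
      ≤ C₂ * (∫ x, |u n x - u' x| ∂μ) + C₁ * (∫ x, |v n x - v' x| ∂μ) := by
    intro n
    rw [← integral_sub (hiuv n) hiuv', Real.norm_eq_abs]
    have hint1 : Integrable (fun x => |u n x - u' x|) μ :=
      (integrable_condExp.sub integrable_condExp).abs
    have hint2 : Integrable (fun x => |v n x - v' x|) μ :=
      (integrable_condExp.sub integrable_condExp).abs
    calc |∫ x, (u n x * v n x - u' x * v' x) ∂μ|
        ≤ ∫ x, |u n x * v n x - u' x * v' x| ∂μ := by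
          simpa [Real.norm_eq_abs] using
            norm_integral_le_integral_norm (fun x => u n x * v n x - u' x * v' x)
    _ ≤ ∫ x, (C₂ * |u n x - u' x| + C₁ * |v n x - v' x|) ∂μ := by
          refine integral_mono_ae ((hiuv n).sub hiuv').abs
            ((hint1.const_mul C₂).add (hint2.const_mul C₁)) ?_
          filter_upwards [hvb n, hub'] with x h1 h2
          have hrw : u n x * v n x - u' x * v' x
              = (u n x - u' x) * v n x + u' x * (v n x - v' x) := by ring
          rw [hrw]
          calc |(u n x - u' x) * v n x + u' x * (v n x - v' x)|
              ≤ |(u n x - u' x) * v n x| + |u' x * (v n x - v' x)| := abs_add_le _ _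
          _ = |u n x - u' x| * |v n x| + |u' x| * |v n x - v' x| := by rw [abs_mul, abs_mul]
          _ ≤ C₂ * |u n x - u' x| + C₁ * |v n x - v' x| := by
                have g1 : |u n x - u' x| * |v n x| ≤ |u n x - u' x| * C₂ :=
                  mul_le_mul_of_nonneg_left h1 (abs_nonneg _)
                have g2 : |u' x| * |v n x - v' x| ≤ C₁ * |v n x - v' x| :=
                  mul_le_mul_of_nonneg_right h2 (abs_nonneg _)
                linarith [g1, g2]
    _ = C₂ * (∫ x, |u n x - u' x| ∂μ) + C₁ * (∫ x, |v n x - v' x| ∂μ) := by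
          rw [integral_add (hint1.const_mul C₂) (hint2.const_mul C₁),
            integral_const_mul, integral_const_mul]
  have hdiff : Tendsto (fun n => ∫ x, u n x * v n x ∂μ - ∫ x, u' x * v' x ∂μ) atTop (𝓝 0) := by
    refine squeeze_zero_norm key ?_
    have := (t1.const_mul C₂).add (t2.const_mul C₁)
    simpa using this
  have := hdiff.add_const (∫ x, u' x * v' x ∂μ)
  simpa using this


end AuxSW


private lemma cont_integrable {α : Type*} [TopologicalSpace α] [CompactSpace α]
    [MeasurableSpace α] [OpensMeasurableSpace α] (ρ : Measure α) [IsFiniteMeasure ρ]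
    (F : C(α, ℝ)) : Integrable (⇑F) ρ :=
  ⟨F.continuous.measurable.aestronglyMeasurable,
   HasFiniteIntegral.of_bounded (C := ‖F‖) (.of_forall fun x => F.norm_coe_le_norm x)⟩

/-- If `(G_n)` is a decreasing sequence of sub-σ-algebras with
intersection `G`, then `μ ⊠_{G_n} μ (A × B) → μ ⊠_G μ (A × B)` for all Borel sets
`A`, `B`, and `μ ⊠_{G_n} μ` converges weakly to `μ ⊠_G μ`. -/
theorem condSquare_convergence
    {X : Type*} [MetricSpace X] [CompactSpace X] [m0 : MeasurableSpace X] [BorelSpace X]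
    (μ : Measure X) [IsProbabilityMeasure μ]
    (G : ℕ → MeasurableSpace X) (hG : ∀ n, G n ≤ m0) (hmono : Antitone G)
    (ν : ℕ → Measure (X × X)) (hν : ∀ n, IsCondSquare (G n) μ (ν n))
    (lam : Measure (X × X)) (hlam : IsCondSquare (⨅ n : ℕ, G n) μ lam) :
    (∀ A B : Set X, MeasurableSet A → MeasurableSet B →
      Tendsto (fun n : ℕ => ν n (A ×ˢ B)) atTop (𝓝 (lam (A ×ˢ B)))) ∧
    ∀ f : X × X → ℝ, Continuous f →
      Tendsto (fun n : ℕ => ∫ p, f p ∂(ν n)) atTop (𝓝 (∫ p, f p ∂lam)) := by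
  have hGinf_le : (⨅ n : ℕ, G n) ≤ m0 := (iInf_le G 0).trans (hG 0)
  haveI hνP : ∀ n, IsProbabilityMeasure (ν n) := fun n => (hν n).isProbabilityMeasure' (hG n)
  haveI hlamP : IsProbabilityMeasure lam := hlam.isProbabilityMeasure' hGinf_le
  constructor
  · -- part 1: convergence on rectangles
    intro A B hA hB
    have hAm : Measurable (A.indicator (fun _ => (1 : ℝ))) :=
      measurable_const.indicator hA
    have hBm : Measurable (B.indicator (fun _ => (1 : ℝ))) :=
      measurable_const.indicator hB
    have hconv := tendsto_integral_condexp_mul (μ := μ) G hG hmono hAm hBm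
      (indicator_abs_le A) (indicator_abs_le B)
    have h2 := hlam A B hA hB
    rw [h2]
    have h1 : ∀ n, ν n (A ×ˢ B) = ENNReal.ofReal
        (∫ x, (μ[A.indicator (fun _ => (1 : ℝ))|G n]) x *
              (μ[B.indicator (fun _ => (1 : ℝ))|G n]) x ∂μ) := fun n => hν n A B hA hB
    simp_rw [h1]
    exact (ENNReal.continuous_ofReal.tendsto _).comp hconv
  · -- part 2: weak convergence
    intro f hf
    set M : Set C(X × X, ℝ) :=
      {F | ∃ g h : C(X, ℝ), F = g.comp ContinuousMap.fst * h.comp ContinuousMap.snd} with hM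
    -- every product function has the convergence property
    have hMS : ∀ F ∈ M, Tendsto (fun n => ∫ p, F p ∂(ν n)) atTop (𝓝 (∫ p, F p ∂lam)) := by
      rintro _ ⟨g, h, rfl⟩
      have hgb : ∀ x, |g x| ≤ ‖g‖ := fun x => by
        simpa [Real.norm_eq_abs] using g.norm_coe_le_norm x
      have hhb : ∀ x, |h x| ≤ ‖h‖ := fun x => by
        simpa [Real.norm_eq_abs] using h.norm_coe_le_norm x
      have hgm : Measurable ⇑g := g.continuous.measurable
      have hhm : Measurable ⇑h := h.continuous.measurable
      have e1 : ∀ n, ∫ p, ((g.comp ContinuousMap.fst * h.comp ContinuousMap.snd : C(X × X, ℝ)) : X × X → ℝ) p ∂(ν n)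
          = ∫ x, (μ[⇑g|G n]) x * (μ[⇑h|G n]) x ∂μ := fun n => by
        have := (hν n).integral_prod_mul (hG n) hgm hhm hgb hhb
        simpa using this
      have e2 : ∫ p, ((g.comp ContinuousMap.fst * h.comp ContinuousMap.snd : C(X × X, ℝ)) : X × X → ℝ) p ∂lam
          = ∫ x, (μ[⇑g|⨅ n : ℕ, G n]) x * (μ[⇑h|⨅ n : ℕ, G n]) x ∂μ := by
        have := hlam.integral_prod_mul hGinf_le hgm hhm hgb hhb
        simpa using this
      rw [e2]
      simp_rw [e1]
      exact tendsto_integral_condexp_mul (μ := μ) G hG hmono hgm hhm hgb hhb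
    -- the span of M has the convergence property
    have hspan : ∀ F ∈ Submodule.span ℝ M,
        Tendsto (fun n => ∫ p, F p ∂(ν n)) atTop (𝓝 (∫ p, F p ∂lam)) := by
      intro F hF
      induction hF using Submodule.span_induction with
      | mem F hFM => exact hMS F hFM
      | zero => simpa using tendsto_const_nhds
      | add F F' _ _ hx hy =>
        have hrw : ∀ (ρ : Measure (X × X)), IsProbabilityMeasure ρ →
            ∫ p, (F + F') p ∂ρ = (∫ p, F p ∂ρ) + ∫ p, F' p ∂ρ := by
          intro ρ hρ
          simp only [ContinuousMap.add_apply]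
          exact integral_add (cont_integrable ρ F) (cont_integrable ρ F')
        have : (fun n => ∫ p, (F + F') p ∂(ν n))
            = fun n => (∫ p, F p ∂(ν n)) + ∫ p, F' p ∂(ν n) :=
          funext fun n => hrw (ν n) (hνP n)
        rw [this, hrw lam hlamP]
        exact hx.add hy
      | smul c F _ hx =>
        have hrw : ∀ (ρ : Measure (X × X)),
            ∫ p, (c • F) p ∂ρ = c * ∫ p, F p ∂ρ := by
          intro ρ
          simp only [ContinuousMap.smul_apply, smul_eq_mul]
          rw [integral_const_mul]
        have : (fun n => ∫ p, (c • F) p ∂(ν n)) = fun n => c * ∫ p, F p ∂(ν n) :=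
          funext fun n => hrw (ν n)
        rw [this, hrw lam]
        exact hx.const_mul c
    -- M is a submonoid, so the span is the subalgebra generated by M
    have hM_one : (1 : C(X × X, ℝ)) ∈ M := ⟨1, 1, by ext p; simp⟩
    have hM_mul : ∀ F ∈ M, ∀ F' ∈ M, F * F' ∈ M := by
      rintro _ ⟨g, h, rfl⟩ _ ⟨g', h', rfl⟩
      refine ⟨g * g', h * h', ?_⟩
      ext p
      simp only [ContinuousMap.mul_apply, ContinuousMap.comp_apply]
      ring
    have hadjoin_span : Subalgebra.toSubmodule (Algebra.adjoin ℝ M) = Submodule.span ℝ M := by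
      refine Algebra.adjoin_eq_span_of_subset (R := ℝ) (s := M) ?_
      have hclosure : Submonoid.closure M ≤
          (⟨⟨M, fun hx hy => hM_mul _ hx _ hy⟩, hM_one⟩ : Submonoid C(X × X, ℝ)) := by
        exact Submonoid.closure_le.2 le_rfl
      intro x hx
      exact Submodule.subset_span (hclosure hx)
    -- the subalgebra separates points
    have hsep : (Algebra.adjoin ℝ M).SeparatesPoints := by
      intro p q hpq
      by_cases h1 : p.1 = q.1
      · have h2 : p.2 ≠ q.2 := fun h2 => hpq (Prod.ext h1 h2)
        set gd : C(X, ℝ) := ⟨fun x => dist x q.2, continuous_id.dist continuous_const⟩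
        set F : C(X × X, ℝ) := (1 : C(X, ℝ)).comp ContinuousMap.fst *
          gd.comp ContinuousMap.snd with hFdef
        refine ⟨⇑F, ⟨F, Algebra.subset_adjoin ⟨1, gd, rfl⟩, rfl⟩, ?_⟩
        simp only [hFdef, ContinuousMap.mul_apply, ContinuousMap.comp_apply,
          ContinuousMap.one_apply, one_mul]
        simp only [gd, ContinuousMap.coe_mk]
        exact fun hcon => h2 (by simpa [dist_eq_zero] using hcon)
      · set gd : C(X, ℝ) := ⟨fun x => dist x q.1, continuous_id.dist continuous_const⟩
        set F : C(X × X, ℝ) := gd.comp ContinuousMap.fst *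
          (1 : C(X, ℝ)).comp ContinuousMap.snd with hFdef
        refine ⟨⇑F, ⟨F, Algebra.subset_adjoin ⟨gd, 1, rfl⟩, rfl⟩, ?_⟩
        simp only [hFdef, ContinuousMap.mul_apply, ContinuousMap.comp_apply,
          ContinuousMap.one_apply, mul_one]
        simpa [gd] using fun hcon => h1 (by simpa [dist_eq_zero] using hcon)
    -- ε/3 argument
    set Fc : C(X × X, ℝ) := ⟨f, hf⟩ with hFc
    rw [Metric.tendsto_atTop]
    intro ε hε
    obtain ⟨F', hF'⟩ := ContinuousMap.exists_mem_subalgebra_near_continuousMap_of_separatesPoints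
      (Algebra.adjoin ℝ M) hsep Fc (ε / 3) (by linarith)
    have hF'span : (F' : C(X × X, ℝ)) ∈ Submodule.span ℝ M := by
      rw [← hadjoin_span]
      exact F'.2
    have hP := hspan _ hF'span
    obtain ⟨N, hN⟩ := Metric.tendsto_atTop.mp hP (ε / 3) (by linarith)
    refine ⟨N, fun n hn => ?_⟩
    have hbound : ∀ (ρ : Measure (X × X)), IsProbabilityMeasure ρ →
        dist (∫ p, f p ∂ρ) (∫ p, (F' : C(X × X, ℝ)) p ∂ρ) < ε / 3 := by
      intro ρ hρ
      show dist (∫ p, Fc p ∂ρ) (∫ p, (F' : C(X × X, ℝ)) p ∂ρ) < ε / 3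
      rw [dist_eq_norm, ← integral_sub (cont_integrable ρ Fc) (cont_integrable ρ F')]
      calc ‖∫ p, (Fc p - (F' : C(X × X, ℝ)) p) ∂ρ‖
          ≤ ‖Fc - (F' : C(X × X, ℝ))‖ * (ρ Set.univ).toReal := by
            refine norm_integral_le_of_norm_le_const (.of_forall fun p => ?_)
            simpa using (Fc - (F' : C(X × X, ℝ))).norm_coe_le_norm p
      _ = ‖Fc - (F' : C(X × X, ℝ))‖ := by simp [measure_univ]
      _ < ε / 3 := by rwa [norm_sub_rev] at hF'
    calc dist (∫ p, f p ∂(ν n)) (∫ p, f p ∂lam)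
        ≤ dist (∫ p, f p ∂(ν n)) (∫ p, (F' : C(X × X, ℝ)) p ∂(ν n))
          + dist (∫ p, (F' : C(X × X, ℝ)) p ∂(ν n)) (∫ p, (F' : C(X × X, ℝ)) p ∂lam)
          + dist (∫ p, (F' : C(X × X, ℝ)) p ∂lam) (∫ p, f p ∂lam) := dist_triangle4 _ _ _ _
    _ < ε / 3 + ε / 3 + ε / 3 := by
        refine add_lt_add (add_lt_add (hbound (ν n) (hνP n)) (hN n hn)) ?_
        rw [dist_comm]
        exact hbound lam hlamP
    _ = ε := by ring
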